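/- Let G be a real symmetric invertible 4×4 matrix whose diagonal entries are all zero, and let K = G⁻¹. Then for every pair of distinct indices {A,B} with complementary pair {C,D}, one has K_{AB}·G_{AB} = K_{CD}·G_{CD}; explicitly K₁₂G₁₂ = K₃₄G₃₄, K₁₃G₁₃ = K₂₄G₂₄ and K₁₄G₁₄ = K₂₃G₂₃. -/

import Mathlib

theorem stmt_10_aux (G K : Matrix (Fin 4) (Fin 4) ℝ)
    (p : ∀ i j : Fin 4, K i j * G i j = K j i * G j i)
    (e01 : K 0 1 * G 0 1 = K 2 3 * G 2 3)
    (e02 : K 0 2 * G 0 2 = K 1 3 * G 1 3)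
    (e03 : K 0 3 * G 0 3 = K 1 2 * G 1 2) :
    (∀ A B C D : Fin 4, A ≠ B → A ≠ C → A ≠ D → B ≠ C → B ≠ D → C ≠ D →
      K A B * G A B = K C D * G C D) := by
  intro A B C D hAB hAC hAD hBC hBD hCD
  fin_cases A <;> fin_cases B <;> fin_cases C <;> fin_cases D <;>
    first
      | exact absurd rfl hAB
      | exact absurd rfl hAC
      | exact absurd rfl hAD
      | exact absurd rfl hBC
      | exact absurd rfl hBD
      | exact absurd rfl hCD
      | exact e01
      | exact (p _ _).trans e01
      | exact (e01).trans (p _ _)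
      | exact ((p _ _).trans e01).trans (p _ _)
      | exact e01.symm
      | exact (p _ _).trans e01.symm
      | exact (e01.symm).trans (p _ _)
      | exact ((p _ _).trans e01.symm).trans (p _ _)
      | exact e02
      | exact (p _ _).trans e02
      | exact (e02).trans (p _ _)
      | exact ((p _ _).trans e02).trans (p _ _)
      | exact e02.symm
      | exact (p _ _).trans e02.symm
      | exact (e02.symm).trans (p _ _)
      | exact ((p _ _).trans e02.symm).trans (p _ _)
      | exact e03
      | exact (p _ _).trans e03
      | exact (e03).trans (p _ _)
      | exact ((p _ _).trans e03).trans (p _ _)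
      | exact e03.symm
      | exact (p _ _).trans e03.symm
      | exact (e03.symm).trans (p _ _)
      | exact ((p _ _).trans e03.symm).trans (p _ _)

set_option maxHeartbeats 1000000 in
/-- For a real symmetric invertible 4×4 matrix `G` with zero diagonal
and `K = G⁻¹`, for every pair of distinct indices `{A,B}` with complementary pair
`{C,D}` one has `K_{AB}·G_{AB} = K_{CD}·G_{CD}`; explicitly `K₁₂G₁₂ = K₃₄G₃₄`,
`K₁₃G₁₃ = K₂₄G₂₄` and `K₁₄G₁₄ = K₂₃G₂₃`. -/
theorem stmt_10 (G : Matrix (Fin 4) (Fin 4) ℝ)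
    (hsymm : G.IsSymm) (hdiag : ∀ i, G i i = 0) (hinv : IsUnit G.det) :
    (∀ A B C D : Fin 4, A ≠ B → A ≠ C → A ≠ D → B ≠ C → B ≠ D → C ≠ D →
      G⁻¹ A B * G A B = G⁻¹ C D * G C D)
    ∧ G⁻¹ 0 1 * G 0 1 = G⁻¹ 2 3 * G 2 3
    ∧ G⁻¹ 0 2 * G 0 2 = G⁻¹ 1 3 * G 1 3
    ∧ G⁻¹ 0 3 * G 0 3 = G⁻¹ 1 2 * G 1 2 := by
  have hKsymm : (G⁻¹).IsSymm := by
    unfold Matrix.IsSymm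
    rw [Matrix.transpose_nonsing_inv, hsymm.eq]
  set a := G 0 1 with ha
  set b := G 0 2 with hb
  set c := G 0 3 with hc
  set d := G 1 2 with hd
  set e := G 1 3 with he
  set f := G 2 3 with hf
  have hG : G = !![0,a,b,c; a,0,d,e; b,d,0,f; c,e,f,0] := by
    ext i j
    fin_cases i <;> fin_cases j <;>
      simp [ha, hb, hc, hd, he, hf, hdiag] <;> exact hsymm.apply _ _
  have h01 : (!![0,a,b,c; a,0,d,e; b,d,0,f; c,e,f,0] : Matrix (Fin 4) (Fin 4) ℝ).adjugate 0 1
      = -(c*d*f) - b*e*f + a*f^2 := by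
    rw [Matrix.adjugate_apply]
    have hu : (!![0,a,b,c; a,0,d,e; b,d,0,f; c,e,f,0] : Matrix (Fin 4) (Fin 4) ℝ).updateRow 1 (Pi.single 0 1)
        = !![0,a,b,c; 1,0,0,0; b,d,0,f; c,e,f,0] := by
      ext i j
      fin_cases i <;> fin_cases j <;>
        simp [Matrix.updateRow_apply, Pi.single_apply, Matrix.vecHead, Matrix.vecTail]
    rw [hu]
    simp [Matrix.det_succ_row_zero, Fin.sum_univ_succ, Fin.succAbove,
      Fin.castSucc, Fin.castAdd, Fin.castLE, Matrix.vecHead, Matrix.vecTail]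
    ring
  have h23 : (!![0,a,b,c; a,0,d,e; b,d,0,f; c,e,f,0] : Matrix (Fin 4) (Fin 4) ℝ).adjugate 2 3
      = -(a*c*d) - a*b*e + a^2*f := by
    rw [Matrix.adjugate_apply]
    have hu : (!![0,a,b,c; a,0,d,e; b,d,0,f; c,e,f,0] : Matrix (Fin 4) (Fin 4) ℝ).updateRow 3 (Pi.single 2 1)
        = !![0,a,b,c; a,0,d,e; b,d,0,f; 0,0,1,0] := by
      ext i j
      fin_cases i <;> fin_cases j <;>
        simp [Matrix.updateRow_apply, Pi.single_apply, Matrix.vecHead, Matrix.vecTail]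
    rw [hu]
    simp [Matrix.det_succ_row_zero, Fin.sum_univ_succ, Fin.succAbove,
      Fin.castSucc, Fin.castAdd, Fin.castLE, Matrix.vecHead, Matrix.vecTail]
    ring
  have h02 : (!![0,a,b,c; a,0,d,e; b,d,0,f; c,e,f,0] : Matrix (Fin 4) (Fin 4) ℝ).adjugate 0 2
      = -(c*d*e) + b*e^2 - a*e*f := by
    rw [Matrix.adjugate_apply]
    have hu : (!![0,a,b,c; a,0,d,e; b,d,0,f; c,e,f,0] : Matrix (Fin 4) (Fin 4) ℝ).updateRow 2 (Pi.single 0 1)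
        = !![0,a,b,c; a,0,d,e; 1,0,0,0; c,e,f,0] := by
      ext i j
      fin_cases i <;> fin_cases j <;>
        simp [Matrix.updateRow_apply, Pi.single_apply, Matrix.vecHead, Matrix.vecTail]
    rw [hu]
    simp [Matrix.det_succ_row_zero, Fin.sum_univ_succ, Fin.succAbove,
      Fin.castSucc, Fin.castAdd, Fin.castLE, Matrix.vecHead, Matrix.vecTail]
    ring
  have h13 : (!![0,a,b,c; a,0,d,e; b,d,0,f; c,e,f,0] : Matrix (Fin 4) (Fin 4) ℝ).adjugate 1 3
      = -(b*c*d) + b^2*e - a*b*f := by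
    rw [Matrix.adjugate_apply]
    have hu : (!![0,a,b,c; a,0,d,e; b,d,0,f; c,e,f,0] : Matrix (Fin 4) (Fin 4) ℝ).updateRow 3 (Pi.single 1 1)
        = !![0,a,b,c; a,0,d,e; b,d,0,f; 0,1,0,0] := by
      ext i j
      fin_cases i <;> fin_cases j <;>
        simp [Matrix.updateRow_apply, Pi.single_apply, Matrix.vecHead, Matrix.vecTail]
    rw [hu]
    simp [Matrix.det_succ_row_zero, Fin.sum_univ_succ, Fin.succAbove,
      Fin.castSucc, Fin.castAdd, Fin.castLE, Matrix.vecHead, Matrix.vecTail]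
    ring
  have h03 : (!![0,a,b,c; a,0,d,e; b,d,0,f; c,e,f,0] : Matrix (Fin 4) (Fin 4) ℝ).adjugate 0 3
      = c*d^2 - b*d*e - a*d*f := by
    rw [Matrix.adjugate_apply]
    have hu : (!![0,a,b,c; a,0,d,e; b,d,0,f; c,e,f,0] : Matrix (Fin 4) (Fin 4) ℝ).updateRow 3 (Pi.single 0 1)
        = !![0,a,b,c; a,0,d,e; b,d,0,f; 1,0,0,0] := by
      ext i j
      fin_cases i <;> fin_cases j <;>
        simp [Matrix.updateRow_apply, Pi.single_apply, Matrix.vecHead, Matrix.vecTail]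
    rw [hu]
    simp [Matrix.det_succ_row_zero, Fin.sum_univ_succ, Fin.succAbove,
      Fin.castSucc, Fin.castAdd, Fin.castLE, Matrix.vecHead, Matrix.vecTail]
    ring
  have h12 : (!![0,a,b,c; a,0,d,e; b,d,0,f; c,e,f,0] : Matrix (Fin 4) (Fin 4) ℝ).adjugate 1 2
      = c^2*d - b*c*e - a*c*f := by
    rw [Matrix.adjugate_apply]
    have hu : (!![0,a,b,c; a,0,d,e; b,d,0,f; c,e,f,0] : Matrix (Fin 4) (Fin 4) ℝ).updateRow 2 (Pi.single 1 1)
        = !![0,a,b,c; a,0,d,e; 0,1,0,0; c,e,f,0] := by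
      ext i j
      fin_cases i <;> fin_cases j <;>
        simp [Matrix.updateRow_apply, Pi.single_apply, Matrix.vecHead, Matrix.vecTail]
    rw [hu]
    simp [Matrix.det_succ_row_zero, Fin.sum_univ_succ, Fin.succAbove,
      Fin.castSucc, Fin.castAdd, Fin.castLE, Matrix.vecHead, Matrix.vecTail]
    ring
  have e01 : G⁻¹ 0 1 * a = G⁻¹ 2 3 * f := by
    rw [Matrix.inv_def]
    simp only [Matrix.smul_apply, smul_eq_mul]
    rw [hG, h01, h23]
    ring
  have e02 : G⁻¹ 0 2 * b = G⁻¹ 1 3 * e := by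
    rw [Matrix.inv_def]
    simp only [Matrix.smul_apply, smul_eq_mul]
    rw [hG, h02, h13]
    ring
  have e03 : G⁻¹ 0 3 * c = G⁻¹ 1 2 * d := by
    rw [Matrix.inv_def]
    simp only [Matrix.smul_apply, smul_eq_mul]
    rw [hG, h03, h12]
    ring
  refine ⟨?_, e01, e02, e03⟩
  have p : ∀ i j : Fin 4, G⁻¹ i j * G i j = G⁻¹ j i * G j i := by
    intro i j
    rw [hKsymm.apply, hsymm.apply]
  exact stmt_10_aux G G⁻¹ p e01 e02 e03
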